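/- Let f : ℝⁿ → ℝ be differentiable, L-smooth and convex (μ = 0) with minimizer x*. Suppose a₀ = 1 and a_k² = A_k for k ≥ 1, and define the Nemirovski plane-search iteration: the query at step 0 is x₀, y_i = x_i − (1/L)∇f(x_i) for all i ≥ 0, v_i = x₀ − (1/L)Σ_{j=0}^i a_j∇f(x_j), and for i ≥ 1 the point x_i minimizes f over the plane {αy_{i−1} + βv_{i−1} : α, β ∈ ℝ} (assume such a minimizer exists). Then f(y_k) − f(x*) ≤ (4/((k+1)(k+2))) · (L/2)‖x* − x₀‖². -/

import Mathlib

open RealInnerProductSpace Finset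

set_option maxHeartbeats 1600000 in
/-- **Convergence of Nemirovski's accelerated method with a plane search**
(smooth convex case, `μ = 0`). Here `y_i = x_i - (1/L) ∇f(x_i)`,
`v_i = x₀ - (1/L) Σ_{j≤i} a_j ∇f(x_j)`, and for `i ≥ 1` the point `x_i` minimizes `f`
over the plane spanned by `y_{i-1}` and `v_{i-1}`. Then
`f (y k) - f x* ≤ (4/((k+1)(k+2))) (L/2) ‖x* - x₀‖²`. -/
theorem nemirovski_plane_search_convergence {n : ℕ}
    (f : EuclideanSpace ℝ (Fin n) → ℝ) (L : ℝ) (hL : 0 < L)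
    (hdiff : Differentiable ℝ f)
    (hsmooth : ∀ x y : EuclideanSpace ℝ (Fin n),
      f y ≤ f x + ⟪gradient f x, y - x⟫ + L / 2 * ‖y - x‖ ^ 2)
    (hconv : ∀ x y : EuclideanSpace ℝ (Fin n),
      f y ≥ f x + ⟪gradient f x, y - x⟫)
    (xstar : EuclideanSpace ℝ (Fin n)) (hstar : ∀ x, f xstar ≤ f x)
    (a A : ℕ → ℝ) (ha : ∀ i, 0 < a i)
    (hA : ∀ i, A i = ∑ j ∈ Finset.range (i + 1), a j)
    (ha0 : a 0 = 1) (hak : ∀ k, 1 ≤ k → a k ^ 2 = A k)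
    (x y v : ℕ → EuclideanSpace ℝ (Fin n))
    (hy : ∀ i, y i = x i - (1 / L) • gradient f (x i))
    (hv : ∀ i, v i = x 0 - (1 / L) • ∑ j ∈ Finset.range (i + 1), a j • gradient f (x j))
    (hx : ∀ i, 1 ≤ i →
      (∃ α β : ℝ, x i = α • y (i - 1) + β • v (i - 1)) ∧
      (∀ α β : ℝ, f (x i) ≤ f (α • y (i - 1) + β • v (i - 1))))
    (k : ℕ) :
    f (y k) - f xstar ≤
      4 / (((k : ℝ) + 1) * ((k : ℝ) + 2)) * (L / 2 * ‖xstar - x 0‖ ^ 2) := by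
  have hL' : L ≠ 0 := ne_of_gt hL
  -- orthogonality helper: if z minimizes f along the line z + t•d, gradient ⟂ d
  have horth : ∀ (z d : EuclideanSpace ℝ (Fin n)),
      (∀ t : ℝ, f z ≤ f (z + t • d)) → ⟪gradient f z, d⟫ = 0 := by
    intro z d hmin
    by_cases hd : d = 0
    · simp [hd]
    have hdn : (0 : ℝ) < ‖d‖ ^ 2 := by
      have : (0 : ℝ) < ‖d‖ := norm_pos_iff.mpr hd
      positivity
    have key : ∀ t : ℝ, 0 ≤ t * ⟪gradient f z, d⟫ + L / 2 * (t ^ 2 * ‖d‖ ^ 2) := by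
      intro t
      have h1 := hsmooth z (z + t • d)
      have e1 : z + t • d - z = t • d := by abel
      rw [e1, real_inner_smul_right, norm_smul] at h1
      simp only [Real.norm_eq_abs, mul_pow, sq_abs] at h1
      have h2 := hmin t
      linarith
    set c : ℝ := ⟪gradient f z, d⟫ with hc
    have hD : (0 : ℝ) < 2 * (L * ‖d‖ ^ 2) := by positivity
    have h := key (-c / (L * ‖d‖ ^ 2))
    have e : (-c / (L * ‖d‖ ^ 2)) * c
        + L / 2 * ((-c / (L * ‖d‖ ^ 2)) ^ 2 * ‖d‖ ^ 2)
        = -(c ^ 2) / (2 * (L * ‖d‖ ^ 2)) := by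
      field_simp
      ring
    rw [e, le_div_iff₀ hD, zero_mul] at h
    nlinarith [sq_nonneg c]
  -- gradient step bound
  have hstep : ∀ i, f (y i) ≤ f (x i) - ‖gradient f (x i)‖ ^ 2 / (2 * L) := by
    intro i
    have h := hsmooth (x i) (y i)
    have e1 : y i - x i = -((1 / L) • gradient f (x i)) := by rw [hy i]; abel
    rw [e1, inner_neg_right, real_inner_smul_right, real_inner_self_eq_norm_sq,
      norm_neg, norm_smul] at h
    simp only [Real.norm_eq_abs, mul_pow, sq_abs] at h
    have e2 : f (x i) + -(1 / L * ‖gradient f (x i)‖ ^ 2)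
        + L / 2 * ((1 / L) ^ 2 * ‖gradient f (x i)‖ ^ 2)
        = f (x i) - ‖gradient f (x i)‖ ^ 2 / (2 * L) := by
      field_simp
      ring
    linarith [h, e2.le, e2.ge]
  have hv0 : v 0 = x 0 - (1 / L) • gradient f (x 0) := by
    rw [hv 0]
    simp [ha0]
  have hvstep : ∀ i, v (i + 1) = v i - (a (i + 1) / L) • gradient f (x (i + 1)) := by
    intro i
    rw [hv (i + 1), hv i, Finset.sum_range_succ, smul_add, smul_smul,
      show 1 / L * a (i + 1) = a (i + 1) / L from by ring]
    abel
  have hA0 : A 0 = 1 := by rw [hA 0]; simp [ha0]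
  have hAstep : ∀ i, A (i + 1) = A i + a (i + 1) := by
    intro i; rw [hA, hA, Finset.sum_range_succ]
  have hApos : ∀ i, 0 < A i := by
    intro i
    rw [hA]
    exact Finset.sum_pos (fun j _ => ha j) (Finset.nonempty_range_iff.mpr (Nat.succ_ne_zero i))
  -- orthogonality relations from the plane search
  have horthstep : ∀ i : ℕ,
      ⟪gradient f (x (i + 1)), y i⟫ = 0 ∧ ⟪gradient f (x (i + 1)), v i⟫ = 0 ∧
      ⟪gradient f (x (i + 1)), x (i + 1)⟫ = 0 := by
    intro i
    obtain ⟨⟨α, β, hab⟩, hmin⟩ := hx (i + 1) (Nat.le_add_left 1 i)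
    simp only [Nat.add_sub_cancel] at hab hmin
    refine ⟨horth _ _ ?_, horth _ _ ?_, horth _ _ ?_⟩
    · intro t
      have h := hmin (α + t) β
      rwa [show (α + t) • y i + β • v i = x (i + 1) + t • y i from by rw [hab]; module] at h
    · intro t
      have h := hmin α (β + t)
      rwa [show α • y i + (β + t) • v i = x (i + 1) + t • v i from by rw [hab]; module] at h
    · intro t
      have h := hmin ((1 + t) * α) ((1 + t) * β)
      rwa [show ((1 + t) * α) • y i + ((1 + t) * β) • v i = x (i + 1) + t • x (i + 1) from by
        rw [hab]; module] at h
  -- potential function decrease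
  have key : ∀ m, A m * (f (y m) - f xstar) + L / 2 * ‖v m - xstar‖ ^ 2
      ≤ L / 2 * ‖x 0 - xstar‖ ^ 2 := by
    intro m
    induction m with
    | zero =>
      have h1 := hstep 0
      have h2 : f (x 0) - f xstar ≤ ⟪x 0 - xstar, gradient f (x 0)⟫ := by
        have h := hconv (x 0) xstar
        have e : ⟪gradient f (x 0), xstar - x 0⟫ = -⟪x 0 - xstar, gradient f (x 0)⟫ := by
          rw [real_inner_comm, show xstar - x 0 = -(x 0 - xstar) from by abel, inner_neg_left]
        rw [e] at h
        linarith
      have h4 : L / 2 * ‖v 0 - xstar‖ ^ 2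
          = L / 2 * ‖x 0 - xstar‖ ^ 2 - ⟪x 0 - xstar, gradient f (x 0)⟫
            + ‖gradient f (x 0)‖ ^ 2 / (2 * L) := by
        have e : v 0 - xstar = (x 0 - xstar) - (1 / L) • gradient f (x 0) := by
          rw [hv0]; abel
        rw [e, norm_sub_sq_real, real_inner_smul_right, norm_smul]
        simp only [Real.norm_eq_abs, mul_pow, sq_abs]
        field_simp
      rw [hA0]
      linarith
    | succ i ih =>
      obtain ⟨hgy, hgv, hgx⟩ := horthstep i
      have h1 := hstep (i + 1)
      have h2 : f (x (i + 1)) + ⟪gradient f (x (i + 1)), xstar⟫ ≤ f xstar := by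
        have h := hconv (x (i + 1)) xstar
        rw [inner_sub_right, hgx] at h
        linarith
      have h3 : f (x (i + 1)) ≤ f (y i) := by
        have h := hconv (x (i + 1)) (y i)
        rw [inner_sub_right, hgy, hgx] at h
        linarith
      have h4 : L / 2 * ‖v (i + 1) - xstar‖ ^ 2
          = L / 2 * ‖v i - xstar‖ ^ 2 + a (i + 1) * ⟪gradient f (x (i + 1)), xstar⟫
            + a (i + 1) ^ 2 * (‖gradient f (x (i + 1))‖ ^ 2 / (2 * L)) := by
        have e : v (i + 1) - xstar = (v i - xstar) - (a (i + 1) / L) • gradient f (x (i + 1)) := by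
          rw [hvstep i]; abel
        have e2 : ⟪v i - xstar, gradient f (x (i + 1))⟫
            = -⟪gradient f (x (i + 1)), xstar⟫ := by
          rw [real_inner_comm, inner_sub_right, hgv]
          ring
        rw [e, norm_sub_sq_real, real_inner_smul_right, e2, norm_smul]
        simp only [Real.norm_eq_abs, mul_pow, sq_abs]
        field_simp
        ring
      rw [hak (i + 1) (Nat.le_add_left 1 i)] at h4
      rw [hAstep i] at h4 ⊢
      have hp1 : (0 : ℝ) ≤ A i + a (i + 1) := by
        have := hApos i; have := ha (i + 1); linarith
      have m1 := mul_le_mul_of_nonneg_left h1 hp1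
      have m2 := mul_le_mul_of_nonneg_left h2 (ha (i + 1)).le
      have m3 := mul_le_mul_of_nonneg_left h3 (hApos i).le
      linarith [ih, m1, m2, m3, h4]
  -- lower bound on A
  have hAk : ∀ m : ℕ, ((m : ℝ) + 1) * ((m : ℝ) + 2) / 4 ≤ A m := by
    intro m
    induction m with
    | zero => rw [hA0]; norm_num
    | succ i ih =>
      have h := hak (i + 1) (Nat.le_add_left 1 i)
      rw [hAstep i] at h ⊢
      push_cast
      have hai := ha (i + 1)
      have hknn : (0 : ℝ) ≤ (i : ℝ) := Nat.cast_nonneg i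
      have halow : ((i : ℝ) + 2) / 2 ≤ a (i + 1) := by
        by_contra hcon
        push_neg at hcon
        nlinarith [hcon, hai, h, ih, hknn]
      linarith
  -- conclusion
  have hP : (0 : ℝ) < (((k : ℝ) + 1) * ((k : ℝ) + 2)) := by positivity
  rw [div_mul_eq_mul_div, le_div_iff₀ hP]
  have hk := key k
  have hq := hAk k
  have hnn : 0 ≤ f (y k) - f xstar := by linarith [hstar (y k)]
  have hv2 : (0 : ℝ) ≤ L / 2 * ‖v k - xstar‖ ^ 2 := by positivity
  have hrev : ‖xstar - x 0‖ = ‖x 0 - xstar‖ := norm_sub_rev _ _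
  rw [hrev]
  linarith [mul_le_mul_of_nonneg_right hq hnn, hk, hv2]
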